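/- Let n ≥ 1 and A ∈ GL_n(ℂ), and suppose the minimal polynomial of A over ℂ has degree p. Then there exists a C-flow φ of A, with all entry functions analytic on ℂ, such that φ(z) ∈ V_A for every z ∈ ℂ; equivalently, φ(z) lies in the ℂ-linear span of {I, A, …, A^{p−1}} for every z ∈ ℂ. -/

import Mathlib

open Filter in
lemma aux_exp_range_mem_nhds_one {𝔸 : Type*} [NormedRing 𝔸] [NormedAlgebra ℂ 𝔸]
    [CompleteSpace 𝔸] : Set.range (NormedSpace.exp : 𝔸 → 𝔸) ∈ nhds (1 : 𝔸) := by
  have h : HasStrictFDerivAt (NormedSpace.exp)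
      ((ContinuousLinearEquiv.refl ℂ 𝔸 : 𝔸 ≃L[ℂ] 𝔸) : 𝔸 →L[ℂ] 𝔸) 0 := by
    exact hasStrictFDerivAt_exp_zero (𝕂 := ℂ) (𝔸 := 𝔸)
  have hmap := h.map_nhds_eq_of_equiv
  rw [NormedSpace.exp_zero] at hmap
  rw [← hmap]
  exact Filter.mem_map.2 (by simp)

lemma aux_exp_add {𝔸 : Type*} [NormedCommRing 𝔸] [NormedAlgebra ℂ 𝔸] [CompleteSpace 𝔸]
    (x y : 𝔸) : NormedSpace.exp (x + y) = NormedSpace.exp x * NormedSpace.exp y :=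
  NormedSpace.exp_add_of_mem_ball (𝕂 := ℂ)
    ((NormedSpace.expSeries_radius_eq_top ℂ 𝔸).symm ▸ edist_lt_top _ _)
    ((NormedSpace.expSeries_radius_eq_top ℂ 𝔸).symm ▸ edist_lt_top _ _)

lemma aux_exists_exp_eq {𝔸 : Type*} [NormedCommRing 𝔸] [NormedAlgebra ℂ 𝔸] [CompleteSpace 𝔸]
    (f : ℂ → 𝔸) (hf : Continuous f) {U : Set ℂ} (hU : IsOpen U) (hUc : IsPreconnected U)
    (h0 : (0:ℂ) ∈ U) (h1 : (1:ℂ) ∈ U) (hf0 : f 0 = 1)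
    (hunit : ∀ t ∈ U, IsUnit (f t)) :
    ∃ b : 𝔸, NormedSpace.exp b = f 1 := by
  set s : Set ℂ := {t | ∃ b : 𝔸, NormedSpace.exp b = f t} with hs
  have key : ∀ t₀ ∈ U, ∃ N ∈ nhds t₀, ∀ t ∈ N, (t ∈ s ↔ t₀ ∈ s) := by
    intro t₀ ht₀
    obtain ⟨u, hu⟩ := hunit t₀ ht₀
    set g : ℂ → 𝔸 := fun t => (↑u⁻¹ : 𝔸) * f t with hg
    have hgc : Continuous g := continuous_const.mul hf
    have hg0 : g t₀ = 1 := by simp [hg, ← hu]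
    have hN : g ⁻¹' (Set.range (NormedSpace.exp : 𝔸 → 𝔸)) ∈ nhds t₀ := by
      apply hgc.continuousAt.preimage_mem_nhds
      rw [hg0]; exact aux_exp_range_mem_nhds_one
    refine ⟨_, hN, ?_⟩
    intro t ht
    obtain ⟨d, hd⟩ := ht
    have hft : f t = f t₀ * NormedSpace.exp d := by
      rw [hd, hg, ← mul_assoc, ← hu]
      simp
    constructor
    · rintro ⟨c, hc⟩
      refine ⟨c + -d, ?_⟩
      have : f t₀ = f t * NormedSpace.exp (-d) := by
        rw [hft, mul_assoc, ← aux_exp_add]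
        simp
      rw [this, ← hc, ← aux_exp_add]
    · rintro ⟨c, hc⟩
      exact ⟨c + d, by rw [aux_exp_add, hc, ← hft]⟩
  have hopen1 : IsOpen (U ∩ s) := by
    rw [isOpen_iff_mem_nhds]
    rintro t₀ ⟨htU, hts⟩
    obtain ⟨N, hN, hiff⟩ := key t₀ htU
    filter_upwards [hU.mem_nhds htU, hN] with t ha hb
    exact ⟨ha, (hiff t hb).2 hts⟩
  have hopen2 : IsOpen (U ∩ sᶜ) := by
    rw [isOpen_iff_mem_nhds]
    rintro t₀ ⟨htU, hts⟩
    obtain ⟨N, hN, hiff⟩ := key t₀ htU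
    filter_upwards [hU.mem_nhds htU, hN] with t ha hb
    exact ⟨ha, fun h => hts ((hiff t hb).1 h)⟩
  have h0s : (0:ℂ) ∈ s := ⟨0, by rw [NormedSpace.exp_zero, hf0]⟩
  by_contra hcon
  have h1s : (1:ℂ) ∈ sᶜ := fun h => hcon h
  obtain ⟨x, hx⟩ := hUc (U ∩ s) (U ∩ sᶜ) hopen1 hopen2
    (fun t ht => by by_cases h : t ∈ s; exacts [Or.inl ⟨ht, h⟩, Or.inr ⟨ht, h⟩])
    ⟨0, h0, h0, h0s⟩ ⟨1, h1, h1, h1s⟩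
  exact hx.2.2.2 hx.2.1.2

lemma aux_isUnit_subalgebra {R : Type*} [Ring R] [Algebra ℂ R] (S : Subalgebra ℂ R)
    [FiniteDimensional ℂ S] (hcomm : ∀ a b : S, a * b = b * a)
    (x : S) (hx : IsUnit (x : R)) : IsUnit x := by
  have hinj : Function.Injective (LinearMap.mulLeft ℂ x) := by
    intro y z hyz
    have : (x : R) * (y : R) = (x : R) * (z : R) := by
      have := congrArg (Subtype.val) hyz
      simpa [LinearMap.mulLeft_apply] using this
    exact Subtype.coe_injective (hx.mul_left_cancel this)
  obtain ⟨y, hy⟩ := LinearMap.surjective_of_injective hinj 1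
  have hy' : x * y = 1 := hy
  exact ⟨⟨x, y, hy', by rw [hcomm]; exact hy'⟩, rfl⟩

lemma aux_adjoin_le_span {n : ℕ} (hn : 1 ≤ n) (A : Matrix (Fin n) (Fin n) ℂ) {p : ℕ}
    (hp : (minpoly ℂ A).natDegree = p) {x : Matrix (Fin n) (Fin n) ℂ}
    (hx : x ∈ Algebra.adjoin ℂ {A}) :
    x ∈ Submodule.span ℂ (Set.range fun i : Fin p => A ^ (i : ℕ)) := by
  haveI : Nonempty (Fin n) := Fin.pos_iff_nonempty.mp hn
  haveI : Nontrivial (Matrix (Fin n) (Fin n) ℂ) := inferInstance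
  rw [Algebra.adjoin_singleton_eq_range_aeval] at hx
  obtain ⟨g, rfl⟩ := hx
  have hint : IsIntegral ℂ A := IsIntegral.of_finite ℂ A
  have hmon := minpoly.monic hint
  have hppos : 0 < p := hp ▸ minpoly.natDegree_pos hint
  have hne1 : minpoly ℂ A ≠ 1 := by
    intro h
    rw [h] at hp
    simp at hp
    omega
  have hdeg : (g %ₘ minpoly ℂ A).natDegree < p :=
    hp ▸ Polynomial.natDegree_modByMonic_lt g hmon hne1
  have heq : Polynomial.aeval A g = Polynomial.aeval A (g %ₘ minpoly ℂ A) := by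
    conv_lhs => rw [← Polynomial.modByMonic_add_div g (minpoly ℂ A)]
    simp [minpoly.aeval]
  show Polynomial.aeval A g ∈ _
  rw [heq, Polynomial.aeval_eq_sum_range' hdeg]
  refine Submodule.sum_mem _ fun i hi => Submodule.smul_mem _ _ ?_
  exact Submodule.subset_span ⟨⟨i, Finset.mem_range.1 hi⟩, rfl⟩



/-- if the minimal polynomial of the invertible matrix `A` has degree `p`,
then there is a C-flow `φ` of `A` with all entry functions differentiable on `ℂ` such that
`φ(z)` lies in the ℂ-span of `I, A, …, A^{p−1}` for every `z ∈ ℂ`. -/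
theorem exists_C_flow_mem_span_powers (n : ℕ) (hn : 1 ≤ n)
    (A : Matrix (Fin n) (Fin n) ℂ) (hA : IsUnit A) (p : ℕ)
    (hp : (minpoly ℂ A).natDegree = p) :
    ∃ φ : ℂ → Matrix (Fin n) (Fin n) ℂ,
      (∀ z w : ℂ, φ (z + w) = φ z * φ w) ∧
      φ 0 = 1 ∧
      φ 1 = A ∧
      (∀ i j : Fin n, Differentiable ℂ (fun z : ℂ => φ z i j)) ∧
      ∀ z : ℂ, φ z ∈ Submodule.span ℂ (Set.range fun i : Fin p => A ^ (i : ℕ)) := by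
  classical
  haveI : Nonempty (Fin n) := Fin.pos_iff_nonempty.mp hn
  letI : SeminormedRing (Matrix (Fin n) (Fin n) ℂ) := Matrix.linftyOpSemiNormedRing
  letI : NormedRing (Matrix (Fin n) (Fin n) ℂ) := Matrix.linftyOpNormedRing
  letI : NormedAlgebra ℂ (Matrix (Fin n) (Fin n) ℂ) := Matrix.linftyOpNormedAlgebra
  haveI : CompleteSpace (Matrix (Fin n) (Fin n) ℂ) := FiniteDimensional.complete ℂ _
  set S : Subalgebra ℂ (Matrix (Fin n) (Fin n) ℂ) := Algebra.adjoin ℂ {A} with hS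
  haveI : FiniteDimensional ℂ S := inferInstance
  have hcomm : ∀ a b : S, a * b = b * a := by
    rintro ⟨c, hc⟩ ⟨d, hd⟩
    have h1 : Commute c d := by
      refine Algebra.commute_of_mem_adjoin_of_forall_mem_commute hd ?_
      intro x hx
      rw [Set.mem_singleton_iff] at hx
      subst hx
      exact (Algebra.commute_of_mem_adjoin_self hc).symm
    exact Subtype.ext h1
  letI : NormedCommRing S := { (inferInstance : NormedRing S) with mul_comm := hcomm }
  haveI : IsUniformAddGroup S := SeminormedAddCommGroup.to_isUniformAddGroup
  haveI : CompleteSpace S := FiniteDimensional.complete ℂ _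
  haveI : IsTopologicalRing S := NonUnitalSeminormedRing.toIsTopologicalRing
  set a : S := ⟨A, Algebra.self_mem_adjoin_singleton ℂ A⟩ with ha
  -- the determinant polynomial along the line from 1 to A
  set M : Matrix (Fin n) (Fin n) (Polynomial ℂ) :=
    Matrix.of fun i j => Polynomial.C (A i j) * Polynomial.X +
      (1 - Polynomial.X) * (if i = j then 1 else 0) with hM
  set q := M.det with hqdef
  have hq : ∀ t : ℂ, Polynomial.eval t q =
      ((1 - t) • (1 : Matrix (Fin n) (Fin n) ℂ) + t • A).det := by
    intro t
    have h := RingHom.map_det (Polynomial.evalRingHom t) M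
    rw [hqdef]
    rw [show Polynomial.eval t M.det = (Polynomial.evalRingHom t) M.det from rfl, h]
    congr 1
    ext i j
    rw [RingHom.mapMatrix_apply, Matrix.map_apply]
    simp only [hM, Matrix.of_apply, Matrix.add_apply, Matrix.smul_apply,
      Matrix.one_apply, map_add, map_mul, map_sub, map_one, Polynomial.coe_evalRingHom,
      Polynomial.eval_C, Polynomial.eval_X, Polynomial.eval_sub, Polynomial.eval_one,
      apply_ite (Polynomial.eval t), smul_eq_mul]
    split_ifs <;> simp <;> ring
  have hdetA : A.det ≠ 0 := by
    intro h
    rw [Matrix.isUnit_iff_isUnit_det, h] at hA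
    simp at hA
  have hq1 : Polynomial.eval 1 q = A.det := by rw [hq]; simp
  have hq0 : Polynomial.eval 0 q = 1 := by rw [hq]; simp
  have hqne : q ≠ 0 := by
    intro h
    rw [h] at hq1
    simp at hq1
    exact hdetA hq1.symm
  set U : Set ℂ := {t | Polynomial.IsRoot q t}ᶜ with hU
  have hUopen : IsOpen U := (Polynomial.finite_setOf_isRoot hqne).isClosed.isOpen_compl
  have hUconn : IsPreconnected U := by
    refine (Set.Countable.isConnected_compl_of_one_lt_rank ?_
      (Polynomial.finite_setOf_isRoot hqne).countable).isPreconnected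
    rw [Complex.rank_real_complex]
    exact Cardinal.one_lt_two
  have h0U : (0 : ℂ) ∈ U := by
    simp only [hU, Set.mem_compl_iff, Set.mem_setOf_eq, Polynomial.IsRoot]
    rw [hq0]; exact one_ne_zero
  have h1U : (1 : ℂ) ∈ U := by
    simp only [hU, Set.mem_compl_iff, Set.mem_setOf_eq, Polynomial.IsRoot]
    rw [hq1]; exact hdetA
  set f : ℂ → S := fun t => (1 - t) • 1 + t • a with hf
  have hfc : Continuous f := by
    apply Continuous.add
    · exact (continuous_const.sub continuous_id).smul continuous_const
    · exact continuous_id.smul continuous_const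
  have hfval : ∀ t : ℂ, ((f t : S) : Matrix (Fin n) (Fin n) ℂ) =
      (1 - t) • (1 : Matrix (Fin n) (Fin n) ℂ) + t • A := by
    intro t; rfl
  have hunit : ∀ t ∈ U, IsUnit (f t) := by
    intro t ht
    apply aux_isUnit_subalgebra S hcomm
    rw [hfval]
    rw [Matrix.isUnit_iff_isUnit_det, isUnit_iff_ne_zero, ← hq t]
    exact ht
  have hf0 : f 0 = 1 := by simp [hf]
  have hf1 : f 1 = a := by simp [hf]
  obtain ⟨b, hb⟩ := aux_exists_exp_eq f hfc hUopen hUconn h0U h1U hf0 hunit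
  rw [hf1] at hb
  set B : Matrix (Fin n) (Fin n) ℂ := (b : Matrix (Fin n) (Fin n) ℂ) with hB
  have hval : ∀ y : S, ((NormedSpace.exp y : S) : Matrix (Fin n) (Fin n) ℂ) =
      NormedSpace.exp (y : Matrix (Fin n) (Fin n) ℂ) := by
    intro y
    exact NormedSpace.map_exp_of_mem_ball (𝕂 := ℂ) (S.val) continuous_subtype_val y
      ((NormedSpace.expSeries_radius_eq_top ℂ S).symm ▸ edist_lt_top _ _)
  have hexpB : NormedSpace.exp B = A := by
    rw [hB, ← hval]; exact congrArg Subtype.val hb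
  refine ⟨fun z => NormedSpace.exp (z • B), ?_, ?_, ?_, ?_, ?_⟩
  · intro z w
    show NormedSpace.exp ((z + w) • B) = NormedSpace.exp (z • B) * NormedSpace.exp (w • B)
    rw [add_smul]
    exact NormedSpace.exp_add_of_commute_of_mem_ball (𝕂 := ℂ) (((Commute.refl B).smul_left z).smul_right w)
      ((NormedSpace.expSeries_radius_eq_top ℂ (Matrix (Fin n) (Fin n) ℂ)).symm ▸ edist_lt_top _ _)
      ((NormedSpace.expSeries_radius_eq_top ℂ (Matrix (Fin n) (Fin n) ℂ)).symm ▸ edist_lt_top _ _)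
  · show NormedSpace.exp ((0 : ℂ) • B) = 1
    rw [zero_smul]; exact NormedSpace.exp_zero
  · show NormedSpace.exp ((1 : ℂ) • B) = A
    rw [one_smul]; exact hexpB
  · intro i j
    have hd : Differentiable ℂ (fun z : ℂ => NormedSpace.exp (z • B)) := fun z =>
      (hasDerivAt_exp_smul_const B z).differentiableAt
    let e : Matrix (Fin n) (Fin n) ℂ →ₗ[ℂ] ℂ :=
      { toFun := fun M => M i j, map_add' := fun _ _ => rfl, map_smul' := fun _ _ => rfl }
    exact ((LinearMap.toContinuousLinearMap e).differentiable).comp hd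
  · intro z
    show NormedSpace.exp (z • B) ∈ Submodule.span ℂ (Set.range fun i : Fin p => A ^ (i : ℕ))
    have hzB : z • B = ((z • b : S) : Matrix (Fin n) (Fin n) ℂ) := rfl
    have : NormedSpace.exp (z • B) = ((NormedSpace.exp (z • b) : S) :
        Matrix (Fin n) (Fin n) ℂ) := by rw [hval, hzB]
    rw [this]
    exact aux_adjoin_le_span hn A hp (NormedSpace.exp (z • b)).2
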